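/- For every formula A ⊆ M and every finite set Δ of formulas whose set of possible approximate models ⟦Δ⟧_pam is nonempty (no assumption on the support of p), the conditional probability converges as μ → 1 from below: lim_{μ→1⁻} P_μ(A | Δ) = (∑_{m ∈ ⟦Δ⟧_pam ∩ ⟦A⟧_p} p m) / (∑_{m ∈ ⟦Δ⟧_pam} p m). -/

import Mathlib

open Classical

noncomputable section

variable {M : Type*}

/-- Likelihood of a formula (a set of models) in a model. -/
noncomputable def ell (μ : ℝ) (B : Set M) (m : M) : ℝ :=
  if m ∈ B then μ else 1 - μ

/-- Joint likelihood of a finite set of formulas in a model. -/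
noncomputable def ellS (μ : ℝ) (Δ : Finset (Set M)) (m : M) : ℝ :=
  ∏ B ∈ Δ, ell μ B m

/-- Conditional probability P_μ(A | Δ) of the generative logic model. -/
noncomputable def condP [Fintype M] (p : M → ℝ) (μ : ℝ) (A : Set M)
    (Δ : Finset (Set M)) : ℝ :=
  (∑ m, ell μ A m * ellS μ Δ m * p m) / (∑ m, ellS μ Δ m * p m)

/-- Models of a finite set of formulas. -/
def Mdl (Δ : Finset (Set M)) : Set M := {m | ∀ B ∈ Δ, m ∈ B}

/-- Possible models of a finite set of formulas. -/
def PMod (p : M → ℝ) (Δ : Finset (Set M)) : Set M :=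
  {m | (∀ B ∈ Δ, m ∈ B) ∧ p m ≠ 0}

/-- Possible models of a single formula. -/
def PModA (p : M → ℝ) (A : Set M) : Set M := {m | m ∈ A ∧ p m ≠ 0}

/-- S is a maximal consistent subset of Δ. -/
def IsMaxConsistent (Δ S : Finset (Set M)) : Prop :=
  S ⊆ Δ ∧ Mdl S ≠ ∅ ∧ ∀ B ∈ Δ \ S, Mdl (insert B S) = ∅

/-- Cardinality-maximal consistent subsets of Δ. -/
def MCS (Δ : Finset (Set M)) : Set (Finset (Set M)) :=
  {S | IsMaxConsistent Δ S ∧ ∀ S', IsMaxConsistent Δ S' → S'.card ≤ S.card}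

/-- Approximate models of Δ. -/
def AMod (Δ : Finset (Set M)) : Set M := ⋃ S ∈ MCS Δ, Mdl S

/-- S is a maximal possible subset of Δ (w.r.t. p). -/
def IsMaxPossible (p : M → ℝ) (Δ S : Finset (Set M)) : Prop :=
  S ⊆ Δ ∧ PMod p S ≠ ∅ ∧ ∀ B ∈ Δ \ S, PMod p (insert B S) = ∅

/-- Cardinality-maximal possible subsets of Δ. -/
def MPS (p : M → ℝ) (Δ : Finset (Set M)) : Set (Finset (Set M)) :=
  {S | IsMaxPossible p Δ S ∧ ∀ S', IsMaxPossible p Δ S' → S'.card ≤ S.card}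

/-- Possible approximate models of Δ. -/
def PAMod (p : M → ℝ) (Δ : Finset (Set M)) : Set M := ⋃ S ∈ MPS p Δ, PMod p S

namespace Stmt13Aux

/-- Number of formulas of `Δ` satisfied by `m`. -/
def kk (Δ : Finset (Set M)) (m : M) : ℕ := (Δ.filter (fun B => m ∈ B)).card

lemma kk_le (Δ : Finset (Set M)) (m : M) : kk Δ m ≤ Δ.card :=
  Finset.card_filter_le _ _

lemma ellS_eq (μ : ℝ) (Δ : Finset (Set M)) (m : M) :
    ellS μ Δ m = μ ^ kk Δ m * (1 - μ) ^ (Δ.card - kk Δ m) := by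
  unfold ellS ell kk
  rw [← Finset.prod_filter_mul_prod_filter_not Δ (fun B => m ∈ B)]
  congr 1
  · rw [Finset.prod_congr rfl (fun B hB => if_pos (Finset.mem_filter.mp hB).2),
      Finset.prod_const]
  · rw [Finset.prod_congr rfl (fun B hB => if_neg (Finset.mem_filter.mp hB).2),
      Finset.prod_const]
    congr 1
    have := Finset.card_filter_add_card_filter_not (s := Δ) (p := fun B => m ∈ B)
    omega

lemma mem_PMod {p : M → ℝ} {S : Finset (Set M)} {m : M} :
    m ∈ PMod p S ↔ (∀ B ∈ S, m ∈ B) ∧ p m ≠ 0 := Iff.rfl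

lemma subset_filter {p : M → ℝ} {Δ S : Finset (Set M)} {m : M}
    (hS : S ⊆ Δ) (hm : m ∈ PMod p S) : S ⊆ Δ.filter (fun B => m ∈ B) :=
  fun B hB => Finset.mem_filter.mpr ⟨hS hB, hm.1 B hB⟩

variable {p : M → ℝ} {Δ : Finset (Set M)} {K : ℕ}

lemma filter_maxPossible (hK : ∀ m, p m ≠ 0 → kk Δ m ≤ K)
    {m : M} (hm : p m ≠ 0) (hkm : kk Δ m = K) :
    IsMaxPossible p Δ (Δ.filter (fun B => m ∈ B)) := by
  refine ⟨Finset.filter_subset _ _, ?_, ?_⟩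
  · apply Set.nonempty_iff_ne_empty.mp
    exact ⟨m, fun B hB => (Finset.mem_filter.mp hB).2, hm⟩
  · intro B hB
    by_contra hne
    obtain ⟨m', hm'⟩ := Set.nonempty_iff_ne_empty.mpr hne
    have hsub : insert B (Δ.filter (fun B => m ∈ B)) ⊆ Δ.filter (fun B => m' ∈ B) := by
      apply subset_filter _ hm'
      intro C hC
      rcases Finset.mem_insert.mp hC with rfl | hC
      · exact (Finset.mem_sdiff.mp hB).1
      · exact Finset.filter_subset _ _ hC
    have hBnot : B ∉ Δ.filter (fun B => m ∈ B) := (Finset.mem_sdiff.mp hB).2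
    have hcard := Finset.card_le_card hsub
    rw [Finset.card_insert_of_notMem hBnot] at hcard
    have h1 : kk Δ m' ≤ K := hK m' hm'.2
    unfold kk at hkm h1
    omega

lemma maxPossible_card_le (hK : ∀ m, p m ≠ 0 → kk Δ m ≤ K)
    {S : Finset (Set M)} (hS : IsMaxPossible p Δ S) : S.card ≤ K := by
  obtain ⟨m, hm⟩ := Set.nonempty_iff_ne_empty.mpr hS.2.1
  calc S.card ≤ kk Δ m := Finset.card_le_card (subset_filter hS.1 hm)
    _ ≤ K := hK m hm.2

lemma PAMod_eq (hK : ∀ m, p m ≠ 0 → kk Δ m ≤ K)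
    (hex : ∃ m, p m ≠ 0 ∧ kk Δ m = K) :
    PAMod p Δ = {m | p m ≠ 0 ∧ kk Δ m = K} := by
  obtain ⟨ms, hms, hkms⟩ := hex
  ext m
  simp only [PAMod, Set.mem_iUnion, Set.mem_setOf_eq]
  constructor
  · rintro ⟨S, hSmem, hm⟩
    obtain ⟨hSmp, hScard⟩ : IsMaxPossible p Δ S ∧
        ∀ S', IsMaxPossible p Δ S' → S'.card ≤ S.card := hSmem
    refine ⟨hm.2, ?_⟩
    have h1 : K ≤ S.card := by
      have := hScard _ (filter_maxPossible hK hms hkms)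
      unfold kk at hkms
      omega
    have h2 : S.card ≤ kk Δ m := Finset.card_le_card (subset_filter hSmp.1 hm)
    have h3 : kk Δ m ≤ K := hK m hm.2
    omega
  · rintro ⟨hm, hkm⟩
    refine ⟨Δ.filter (fun B => m ∈ B), ⟨filter_maxPossible hK hm hkm, ?_⟩, ?_⟩
    · intro S' hS'
      have := maxPossible_card_le hK hS'
      unfold kk at hkm
      omega
    · exact ⟨fun B hB => (Finset.mem_filter.mp hB).2, hm⟩

lemma pow_factor {μ : ℝ} (hμ : μ ≠ 0) {k K n : ℕ} (hkK : k ≤ K) (hKn : K ≤ n) :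
    μ ^ k * (1 - μ) ^ (n - k) = μ ^ K * (1 - μ) ^ (n - K) * ((1 - μ) / μ) ^ (K - k) := by
  obtain ⟨j, rfl⟩ : ∃ j, K = k + j := ⟨K - k, by omega⟩
  rw [show k + j - k = j from by omega, div_pow,
    show n - k = (n - (k + j)) + j from by omega, pow_add, pow_add]
  field_simp

lemma ell_ellS (μ : ℝ) (A : Set M) (Δ : Finset (Set M)) (m : M) :
    ell μ A m * ellS μ Δ m =
      μ ^ (kk Δ m + if m ∈ A then 1 else 0) *
        (1 - μ) ^ (Δ.card + 1 - (kk Δ m + if m ∈ A then 1 else 0)) := by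
  have hle := kk_le Δ m
  rw [ellS_eq]
  unfold ell
  by_cases hm : m ∈ A
  · simp only [hm, if_pos, if_true]
    rw [show Δ.card + 1 - (kk Δ m + 1) = Δ.card - kk Δ m from by omega, pow_succ]
    ring
  · simp only [hm, if_neg, if_false]
    rw [add_zero, show Δ.card + 1 - kk Δ m = (Δ.card - kk Δ m) + 1 from by omega, pow_succ]
    ring

end Stmt13Aux

/-- as μ → 1⁻ the conditional probability converges to
conditioning on the possible approximate models of Δ. -/
theorem stmt_13 [Fintype M] [Nonempty M] (p : M → ℝ)
    (hp : ∀ m, 0 ≤ p m) (hps : ∑ m, p m = 1)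
    (A : Set M) (Δ : Finset (Set M)) (h : PAMod p Δ ≠ ∅) :
    Filter.Tendsto (fun μ => condP p μ A Δ)
      (nhdsWithin 1 (Set.Ico (0 : ℝ) 1))
      (nhds ((∑ m ∈ Finset.univ.filter
                (fun m => m ∈ PAMod p Δ ∩ PModA p A), p m) /
             (∑ m ∈ Finset.univ.filter (fun m => m ∈ PAMod p Δ), p m))) := by
  classical
  open Stmt13Aux in
  -- a possible model exists
  obtain ⟨m1, hm1⟩ := Set.nonempty_iff_ne_empty.mpr h
  have hm1p : p m1 ≠ 0 := by
    simp only [PAMod, Set.mem_iUnion] at hm1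
    obtain ⟨S, _, hS⟩ := hm1
    exact hS.2
  set n := Δ.card with hn
  have hsupp : (Finset.univ.filter (fun m => p m ≠ 0)).Nonempty :=
    ⟨m1, by simp [hm1p]⟩
  set K := (Finset.univ.filter (fun m => p m ≠ 0)).sup' hsupp (kk Δ) with hKdef
  have hK : ∀ m, p m ≠ 0 → kk Δ m ≤ K := fun m hm =>
    Finset.le_sup' _ (by simp [hm])
  have hex : ∃ m, p m ≠ 0 ∧ kk Δ m = K := by
    obtain ⟨m, hm, hme⟩ := Finset.exists_mem_eq_sup' hsupp (kk Δ)
    exact ⟨m, (Finset.mem_filter.mp hm).2, hme.symm⟩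
  have hKn : K ≤ n := by
    obtain ⟨m, _, hme⟩ := hex
    exact le_trans (le_of_eq hme.symm) (kk_le Δ m)
  have hPA : PAMod p Δ = {m | p m ≠ 0 ∧ kk Δ m = K} := PAMod_eq hK hex
  set kk' := fun m => kk Δ m + if m ∈ A then 1 else 0 with hkk'
  set Dr := fun μ : ℝ => ∑ m, ((1 - μ) / μ) ^ (K - kk Δ m) * p m with hDrdef
  set Nr := fun μ : ℝ => ∑ m, ((1 - μ) / μ) ^ (K + 1 - kk' m) * p m with hNrdef
  -- the target values
  have hLD : (∑ m, (0 : ℝ) ^ (K - kk Δ m) * p m) =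
      ∑ m ∈ Finset.univ.filter (fun m => m ∈ PAMod p Δ), p m := by
    rw [Finset.sum_filter]
    refine Finset.sum_congr rfl fun m _ => ?_
    by_cases hpm : p m = 0
    · simp [hpm]
    · have hkle := hK m hpm
      by_cases hkm : kk Δ m = K
      · have : m ∈ PAMod p Δ := by rw [hPA]; exact ⟨hpm, hkm⟩
        simp [this, hkm]
      · have : m ∉ PAMod p Δ := by rw [hPA]; exact fun hc => hkm hc.2
        rw [if_neg this, zero_pow (by omega), zero_mul]
  have hLN : (∑ m, (0 : ℝ) ^ (K + 1 - kk' m) * p m) =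
      ∑ m ∈ Finset.univ.filter (fun m => m ∈ PAMod p Δ ∩ PModA p A), p m := by
    rw [Finset.sum_filter]
    refine Finset.sum_congr rfl fun m _ => ?_
    by_cases hpm : p m = 0
    · simp [hpm]
    · have hkle := hK m hpm
      have hmem : m ∈ PAMod p Δ ∩ PModA p A ↔ (kk Δ m = K ∧ m ∈ A) := by
        rw [hPA]
        simp only [Set.mem_inter_iff, Set.mem_setOf_eq, PModA]
        tauto
      by_cases hgood : kk Δ m = K ∧ m ∈ A
      · have hk' : kk' m = K + 1 := by simp [hkk', hgood.2, hgood.1]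
        rw [if_pos (hmem.mpr hgood), hk']
        simp
      · have hk' : kk' m < K + 1 := by
          simp only [hkk']
          by_cases hA : m ∈ A
          · have hne : kk Δ m ≠ K := fun hc => hgood ⟨hc, hA⟩
            simp only [hA, if_true]
            omega
          · simp only [hA, if_false]
            omega
        rw [if_neg (fun hc => hgood (hmem.mp hc)), zero_pow (by omega), zero_mul]
  have hLDpos : (0 : ℝ) < ∑ m ∈ Finset.univ.filter (fun m => m ∈ PAMod p Δ), p m := by
    refine Finset.sum_pos' (fun m _ => hp m) ⟨m1, ?_, ?_⟩
    · simp [hm1]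
    · exact lt_of_le_of_ne (hp m1) (Ne.symm hm1p)
  -- limits of Nr and Dr
  have hratio : Filter.Tendsto (fun μ : ℝ => (1 - μ) / μ)
      (nhdsWithin 1 (Set.Ico (0 : ℝ) 1)) (nhds 0) := by
    have hc : ContinuousAt (fun μ : ℝ => (1 - μ) / μ) 1 :=
      ContinuousAt.div (by fun_prop) continuousAt_id one_ne_zero
    have := hc.tendsto.mono_left (nhdsWithin_le_nhds (s := Set.Ico (0 : ℝ) 1))
    simpa using this
  have hDr : Filter.Tendsto Dr (nhdsWithin 1 (Set.Ico (0 : ℝ) 1))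
      (nhds (∑ m, (0 : ℝ) ^ (K - kk Δ m) * p m)) := by
    exact tendsto_finset_sum _ fun m _ => (hratio.pow _).mul_const _
  have hNr : Filter.Tendsto Nr (nhdsWithin 1 (Set.Ico (0 : ℝ) 1))
      (nhds (∑ m, (0 : ℝ) ^ (K + 1 - kk' m) * p m)) := by
    exact tendsto_finset_sum _ fun m _ => (hratio.pow _).mul_const _
  -- eventual equality of condP with μ * (Nr μ / Dr μ)
  have heq : ∀ μ : ℝ, 0 < μ → μ < 1 → condP p μ A Δ = μ * (Nr μ / Dr μ) := by
    intro μ h0 h1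
    have hμne : μ ≠ 0 := ne_of_gt h0
    have h1μ : (0 : ℝ) < 1 - μ := by linarith
    have hDfac : (∑ m, ellS μ Δ m * p m) = μ ^ K * (1 - μ) ^ (n - K) * Dr μ := by
      rw [hDrdef, Finset.mul_sum]
      refine Finset.sum_congr rfl fun m _ => ?_
      by_cases hpm : p m = 0
      · simp [hpm]
      · rw [ellS_eq, pow_factor hμne (hK m hpm) hKn]
        ring
    have hNfac : (∑ m, ell μ A m * ellS μ Δ m * p m) =
        μ ^ (K + 1) * (1 - μ) ^ (n - K) * Nr μ := by
      rw [hNrdef, Finset.mul_sum]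
      refine Finset.sum_congr rfl fun m _ => ?_
      by_cases hpm : p m = 0
      · simp [hpm]
      · have hkle := hK m hpm
        have hk'le : kk' m ≤ K + 1 := by
          simp only [hkk']
          by_cases hA : m ∈ A
          · simp only [hA, if_true]; omega
          · simp only [hA, if_false]; omega
        have hpf := pow_factor hμne (k := kk' m) (K := K + 1) (n := n + 1) hk'le (by omega)
        have e1 : kk Δ m + (if m ∈ A then 1 else 0) = kk' m := rfl
        have e2 : Δ.card + 1 = n + 1 := rfl
        rw [ell_ellS, e1, e2, hpf, show n + 1 - (K + 1) = n - K from by omega]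
        ring
    have hDrpos : 0 < Dr μ := by
      refine Finset.sum_pos' (fun m _ => ?_) ⟨m1, Finset.mem_univ _, ?_⟩
      · apply mul_nonneg _ (hp m)
        positivity
      · apply mul_pos _ (lt_of_le_of_ne (hp m1) (Ne.symm hm1p))
        positivity
    have hcpos : (0 : ℝ) < μ ^ K * (1 - μ) ^ (n - K) := by
      apply mul_pos <;> positivity
    rw [condP, hDfac, hNfac, pow_succ]
    rw [show μ ^ K * μ * (1 - μ) ^ (n - K) * Nr μ =
      (μ ^ K * (1 - μ) ^ (n - K)) * (μ * Nr μ) from by ring]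
    rw [mul_div_mul_left _ _ (ne_of_gt hcpos), mul_div_assoc]
  have hev : (fun μ : ℝ => μ * (Nr μ / Dr μ)) =ᶠ[nhdsWithin 1 (Set.Ico (0 : ℝ) 1)]
      (fun μ => condP p μ A Δ) := by
    have h1 : ∀ᶠ μ : ℝ in nhdsWithin 1 (Set.Ico (0 : ℝ) 1), (1 / 2 : ℝ) < μ :=
      (eventually_gt_nhds (by norm_num : (1 / 2 : ℝ) < 1)).filter_mono nhdsWithin_le_nhds
    have h2 : ∀ᶠ μ : ℝ in nhdsWithin 1 (Set.Ico (0 : ℝ) 1), μ ∈ Set.Ico (0 : ℝ) 1 :=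
      eventually_mem_nhdsWithin
    filter_upwards [h1, h2] with μ hμ1 hμ2
    exact (heq μ (by linarith [hμ2.1]) hμ2.2).symm
  -- conclude
  have hmain : Filter.Tendsto (fun μ : ℝ => μ * (Nr μ / Dr μ))
      (nhdsWithin 1 (Set.Ico (0 : ℝ) 1))
      (nhds (1 * ((∑ m ∈ Finset.univ.filter
          (fun m => m ∈ PAMod p Δ ∩ PModA p A), p m) /
        (∑ m ∈ Finset.univ.filter (fun m => m ∈ PAMod p Δ), p m)))) := by
    apply Filter.Tendsto.mul
    · exact Filter.tendsto_id.mono_left nhdsWithin_le_nhds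
    · rw [← hLN, ← hLD]
      exact hNr.div hDr (by rw [hLD]; exact ne_of_gt hLDpos)
  rw [one_mul] at hmain
  exact hmain.congr' hev
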